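/- Let p be a prime, r a positive integer, ν = p^r, and suppose p divides μ. Then α_{μ,ν} = Σ μ! / (s_1! s_2! ... s_k!)^p, where k = ν/p and the sum is over all tuples of nonnegative integers (s_1,...,s_k) with s_1 + ... + s_k = μ/p. -/

import Mathlib

open Finset Polynomial

section Helpers


/-- Product over `range (p*k)` of a function of `b % k` -/
lemma prod_range_mul_mod {M : Type*} [CommMonoid M] (F : ℕ → M) (p k : ℕ) :
    ∏ b ∈ Finset.range (p * k), F (b % k) = (∏ j ∈ Finset.range k, F j) ^ p := by
  induction p with
  | zero => simp
  | succ p ih =>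
      rw [Nat.succ_mul, Finset.prod_range_add, ih, pow_succ]
      congr 1
      refine Finset.prod_congr rfl fun i hi => ?_
      rw [Nat.add_comm, Nat.add_mul_mod_self_right, Nat.mod_eq_of_lt (Finset.mem_range.mp hi)]

lemma sum_range_mul_mod (F : ℕ → ℕ) (p k : ℕ) :
    ∑ b ∈ Finset.range (p * k), F (b % k) = p * ∑ j ∈ Finset.range k, F j := by
  induction p with
  | zero => simp
  | succ p ih =>
      rw [Nat.succ_mul, Finset.sum_range_add, ih, Nat.succ_mul]
      congr 1
      refine Finset.sum_congr rfl fun i hi => ?_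
      rw [Nat.add_comm, Nat.add_mul_mod_self_right, Nat.mod_eq_of_lt (Finset.mem_range.mp hi)]


lemma vanishing_iff (p r : ℕ) (hp : p.Prime) (hr : 0 < r) {ζ : ℂ}
    (hζ : IsPrimitiveRoot ζ (p ^ r)) (c : ℕ → ℤ) :
    (∑ b ∈ Finset.range (p ^ r), (c b : ℂ) * ζ ^ b = 0) ↔
      ∀ b < p ^ r, c b = c (b % p ^ (r - 1)) := by
  set k := p ^ (r - 1) with hk
  set ν := p ^ r with hν
  have hkpos : 0 < k := Nat.pow_pos hp.pos
  have hνk : ν = k * p := by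
    rw [hν, hk, ← pow_succ, Nat.sub_add_cancel hr]
  have hνpos : 0 < ν := Nat.pow_pos hp.pos
  have hkν : k ≤ ν := by
    rw [hνk]; exact Nat.le_mul_of_pos_right _ hp.pos
  have hcyc : Polynomial.cyclotomic ν ℤ = ∑ t ∈ Finset.range p, (X : ℤ[X]) ^ (k * t) := by
    have hν' : ν = p ^ ((r - 1) + 1) := by rw [hν, Nat.sub_add_cancel hr]
    rw [hν', Polynomial.cyclotomic_prime_pow_eq_geom_sum hp]
    exact Finset.sum_congr rfl fun t _ => by rw [← pow_mul, hk]
  constructor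
  · -- forward direction via cyclotomic divisibility
    intro hsum
    set f : ℤ[X] := ∑ b ∈ Finset.range ν, C (c b) * X ^ b with hf
    have hfc : ∀ b < ν, f.coeff b = c b := by
      intro b hb
      rw [hf, Polynomial.finset_sum_coeff]
      simp only [Polynomial.coeff_C_mul, Polynomial.coeff_X_pow]
      rw [Finset.sum_eq_single b (fun i _ hib => by simp [(Ne.symm hib : ¬ b = i)])
        (fun hb' => absurd (Finset.mem_range.mpr hb) hb')]
      simp
    have hfeval : Polynomial.aeval ζ f = 0 := by
      rw [hf, map_sum]
      simpa using hsum
    have hdvd : Polynomial.cyclotomic ν ℤ ∣ f := by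
      rw [Polynomial.cyclotomic_eq_minpoly hζ hνpos]
      exact minpoly.isIntegrallyClosed_dvd (hζ.isIntegral hνpos) hfeval
    obtain ⟨g, hg⟩ := hdvd
    have hcycdeg : (Polynomial.cyclotomic ν ℤ).natDegree = ν - k := by
      rw [Polynomial.natDegree_cyclotomic, hν, Nat.totient_prime_pow hp hr, ← hk]
      show k * (p - 1) = ν - k
      rw [hνk, Nat.mul_sub, Nat.mul_one]
    have key : ∀ b < ν, c b = g.coeff (b % k) := by
      by_cases hg0 : g = 0
      · intro b hb
        have hf0 : f = 0 := by rw [hg, hg0, mul_zero]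
        have := hfc b hb
        rw [hf0] at this
        simp only [Polynomial.coeff_zero] at this
        rw [← this, hg0]
        simp
      · have hfne : f ≠ 0 := by
          rw [hg]
          exact mul_ne_zero (Polynomial.cyclotomic_ne_zero ν ℤ) hg0
        have hfdeg : f.natDegree ≤ ν - 1 := by
          rw [hf]
          refine Polynomial.natDegree_sum_le_of_forall_le _ _ fun b hb => ?_
          refine le_trans (Polynomial.natDegree_C_mul_le _ _) ?_
          simp only [Polynomial.natDegree_X_pow]
          have := Finset.mem_range.mp hb
          omega
        have hgdeg : g.natDegree < k := by
          have h2 := Polynomial.natDegree_mul (Polynomial.cyclotomic_ne_zero ν ℤ) hg0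
          rw [← hg, hcycdeg] at h2
          omega
        intro b hb
        have hfgb : f.coeff b = ∑ t ∈ Finset.range p, (g * X ^ (k * t)).coeff b := by
          rw [hg, mul_comm, hcyc, Finset.mul_sum, Polynomial.finset_sum_coeff]
        have hterm : ∀ t ∈ Finset.range p,
            (g * X ^ (k * t)).coeff b = if t = b / k then g.coeff (b % k) else 0 := by
          intro t _
          rw [Polynomial.coeff_mul_X_pow']
          rcases eq_or_ne t (b / k) with hteq | htne
          · subst hteq
            have h1 : k * (b / k) ≤ b := Nat.mul_div_le b k
            have h2 : k * (b / k) + b % k = b := Nat.div_add_mod b k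
            rw [if_pos h1, if_pos rfl]
            congr 1
            omega
          · rw [if_neg htne]
            by_cases hle : k * t ≤ b
            · rw [if_pos hle]
              have ht' : t < b / k := by
                have h7 : t * k ≤ b := by rw [Nat.mul_comm]; exact hle
                have := (Nat.le_div_iff_mul_le hkpos).mpr h7
                omega
              have h3 : k * (t + 1) ≤ k * (b / k) := Nat.mul_le_mul_left _ (by omega)
              have h4 : k * (b / k) ≤ b := Nat.mul_div_le b k
              have h5 : k * (t + 1) = k * t + k := by ring
              have h6 : k * t + k ≤ b := by
                calc k * t + k = k * (t + 1) := by ring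
                  _ ≤ k * (b / k) := h3
                  _ ≤ b := h4
              exact Polynomial.coeff_eq_zero_of_natDegree_lt (by omega)
            · rw [if_neg hle]
        rw [← hfc b hb, hfgb, Finset.sum_congr rfl hterm, Finset.sum_ite_eq' _ _ _]
        rw [if_pos (Finset.mem_range.mpr (Nat.div_lt_of_lt_mul (by omega)))]
    intro b hb
    have h1 := key b hb
    have h2 := key (b % k) (lt_of_lt_of_le (Nat.mod_lt _ hkpos) hkν)
    rw [Nat.mod_mod_of_dvd _ dvd_rfl] at h2
    rw [h1, h2]
  · -- converse
    intro hc
    have hzk : IsPrimitiveRoot (ζ ^ k) p := hζ.pow hνpos hνk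
    calc ∑ b ∈ Finset.range ν, (c b : ℂ) * ζ ^ b
        = ∑ x ∈ Finset.range p ×ˢ Finset.range k, (c (x.2) : ℂ) * ((ζ ^ k) ^ x.1 * ζ ^ x.2) := by
          refine Finset.sum_nbij' (i := fun b => (b / k, b % k)) (j := fun x => k * x.1 + x.2)
            ?_ ?_ ?_ ?_ ?_
          · intro a ha
            have ha' := Finset.mem_range.mp ha
            simp only [Finset.mem_product, Finset.mem_range]
            exact ⟨Nat.div_lt_of_lt_mul (by omega), Nat.mod_lt _ hkpos⟩
          · intro x hx
            simp only [Finset.mem_product, Finset.mem_range] at hx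
            refine Finset.mem_range.mpr ?_
            show k * x.1 + x.2 < ν
            have h1 : k * x.1 + k ≤ k * p := by
              have h2 := Nat.mul_le_mul_left k (by omega : x.1 + 1 ≤ p)
              rw [Nat.mul_add, Nat.mul_one] at h2
              exact h2
            rw [hνk]
            omega
          · intro a ha
            show k * (a / k) + a % k = a
            exact Nat.div_add_mod a k
          · intro x hx
            simp only [Finset.mem_product, Finset.mem_range] at hx
            show ((k * x.1 + x.2) / k, (k * x.1 + x.2) % k) = x
            have h1 : (k * x.1 + x.2) / k = x.1 := by
              rw [Nat.mul_add_div hkpos, Nat.div_eq_of_lt hx.2]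
              omega
            have h2 : (k * x.1 + x.2) % k = x.2 := by
              rw [Nat.mul_add_mod, Nat.mod_eq_of_lt hx.2]
            exact Prod.ext h1 h2
          · intro b hb
            have hb' := Finset.mem_range.mp hb
            have h2 : k * (b / k) + b % k = b := Nat.div_add_mod b k
            show (c b : ℂ) * ζ ^ b = (c (b % k) : ℂ) * ((ζ ^ k) ^ (b / k) * ζ ^ (b % k))
            rw [hc b hb']
            rw [← pow_mul, ← pow_add, h2]
      _ = (∑ t ∈ Finset.range p, (ζ ^ k) ^ t) * ∑ j ∈ Finset.range k, (c j : ℂ) * ζ ^ j := by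
          rw [Finset.sum_mul_sum, Finset.sum_product]
          refine Finset.sum_congr rfl fun t _ => Finset.sum_congr rfl fun j _ => by ring
      _ = 0 := by rw [hzk.geom_sum_eq_zero hp.one_lt, zero_mul]


section Count
variable {α ι : Type*} [Fintype α] [DecidableEq α] [Fintype ι] [DecidableEq ι]

/-- fibers of `f₀ ∘ σ` have the same cardinality as fibers of `f₀` -/
lemma fib_comp_perm (f₀ : α → ι) (σ : Equiv.Perm α) (i : ι) :
    Fintype.card {a // f₀ (σ a) = i} = Fintype.card {a // f₀ a = i} :=
  Fintype.card_congr (σ.subtypeEquiv fun _ => Iff.rfl)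

/-- two functions with fiber-equivalences are related by a permutation -/
lemma exists_perm_comp (f₀ g : α → ι)
    (h : ∀ i, Fintype.card {a // g a = i} = Fintype.card {a // f₀ a = i}) :
    ∃ τ : Equiv.Perm α, f₀ ∘ τ = g := by
  have e : ∀ i, {a // g a = i} ≃ {a // f₀ a = i} := fun i => Fintype.equivOfCardEq (h i)
  refine ⟨Equiv.ofFiberEquiv e, funext fun a => ?_⟩
  exact Equiv.ofFiberEquiv_map e a

/-- number of functions with prescribed fiber cardinalities, times product of factorials,
equals the factorial of the cardinality of the domain -/
lemma card_fiber_count_mul (m : ι → ℕ) (hm : ∑ i, m i = Fintype.card α) :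
    (Finset.univ.filter fun g : α → ι =>
        ∀ i, Fintype.card {a // g a = i} = m i).card * ∏ i, (m i).factorial =
      (Fintype.card α).factorial := by
  -- model function
  obtain ⟨E⟩ : Nonempty ((Σ i, Fin (m i)) ≃ α) := by
    refine Fintype.card_eq.mp ?_
    simp [Fintype.card_sigma, hm]
  set f₀ : α → ι := fun a => (E.symm a).1 with hf₀
  have hfib : ∀ i, Fintype.card {a // f₀ a = i} = m i := by
    intro i
    have key : ∀ (x : Σ j, Fin (m j)) (h : x.1 = i),
        E ⟨i, Fin.cast (congrArg m h) x.2⟩ = E x := by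
      rintro ⟨j, v⟩ h
      subst h
      rfl
    have hbij : Function.Bijective
        (fun v : Fin (m i) => (⟨E ⟨i, v⟩, by simp [hf₀]⟩ : {a // f₀ a = i})) := by
      constructor
      · intro v w hvw
        have h2 := E.injective (congrArg Subtype.val hvw)
        exact eq_of_heq (Sigma.mk.inj_iff.mp h2).2
      · rintro ⟨a, ha⟩
        refine ⟨Fin.cast (congrArg m ha) (E.symm a).2, ?_⟩
        apply Subtype.ext
        show E ⟨i, Fin.cast _ (E.symm a).2⟩ = a
        rw [key (E.symm a) ha, E.apply_symm_apply]
    rw [← Fintype.card_of_bijective hbij, Fintype.card_fin]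
  set T := Finset.univ.filter fun g : α → ι =>
      ∀ i, Fintype.card {a // g a = i} = m i with hT
  -- count permutations fiberwise over T
  have hmap : ∀ σ : Equiv.Perm α, (f₀ ∘ σ) ∈ T := by
    intro σ
    simp only [hT, Finset.mem_filter, Finset.mem_univ, true_and]
    intro i
    rw [← hfib i]
    exact fib_comp_perm f₀ σ i
  have hcount := Finset.card_eq_sum_card_fiberwise
    (s := Finset.univ) (f := fun σ : Equiv.Perm α => f₀ ∘ σ) (t := T) (fun σ _ => hmap σ)
  rw [Finset.card_univ, Fintype.card_perm] at hcount
  have hfiber_card : ∀ g ∈ T,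
      (Finset.univ.filter fun σ : Equiv.Perm α => f₀ ∘ σ = g).card = ∏ i, (m i).factorial := by
    intro g hg
    simp only [hT, Finset.mem_filter, Finset.mem_univ, true_and] at hg
    obtain ⟨τ, hτ⟩ := exists_perm_comp f₀ g (fun i => by rw [hg i, hfib i])
    have e3 : {σ : Equiv.Perm α // f₀ ∘ σ = g} ≃ {σ : Equiv.Perm α // f₀ ∘ σ = f₀} :=
      { toFun := fun σ => ⟨τ.symm.trans σ.1, by
          funext a
          have := congrFun σ.2 (τ.symm a)
          have h2 := congrFun hτ (τ.symm a)
          simp only [Function.comp_apply, Equiv.trans_apply] at this h2 ⊢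
          rw [this, ← h2, Equiv.apply_symm_apply]⟩
        invFun := fun ρ => ⟨τ.trans ρ.1, by
          funext a
          have := congrFun ρ.2 (τ a)
          have h2 := congrFun hτ a
          simp only [Function.comp_apply, Equiv.trans_apply] at this h2 ⊢
          rw [this, h2]⟩
        left_inv := fun σ => by
          ext a : 2
          simp
        right_inv := fun ρ => by
          ext a : 2
          simp }
    rw [← Fintype.card_subtype]
    rw [Fintype.card_congr e3]
    have := DomMulAct.stabilizer_card f₀
    rw [this]
    exact Finset.prod_congr rfl fun i _ => by rw [hfib i]
  rw [Finset.sum_congr rfl hfiber_card, Finset.sum_const, smul_eq_mul] at hcount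
  exact hcount.symm
end Count

end Helpers


/-- The number of μ-tuples of ν-th roots of unity summing to 0. -/
noncomputable def alpha (μ ν : ℕ) : ℕ :=
  {z : Fin μ → ℂ | (∀ i, z i ^ ν = 1) ∧ ∑ i, z i = 0}.ncard

theorem alpha_prime_power (p : ℕ) (hp : p.Prime) (r : ℕ) (hr : 0 < r)
    (ν : ℕ) (hν : ν = p ^ r) (μ : ℕ) (hμ : 0 < μ) (h : p ∣ μ) :
    alpha μ ν =
      ∑ s ∈ Finset.Nat.antidiagonalTuple (ν / p) (μ / p),
        Nat.factorial μ / (∏ i, Nat.factorial (s i)) ^ p := by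
  classical
  set k := ν / p with hkdef
  have hνpos : 0 < ν := by rw [hν]; exact Nat.pow_pos hp.pos
  have hk : k = p ^ (r - 1) := by
    rw [hkdef, hν]
    conv_lhs => rw [show r = (r - 1) + 1 by omega]
    rw [pow_succ, Nat.mul_div_cancel _ hp.pos]
  have hνk : ν = k * p := by
    rw [hν, hk, ← pow_succ, Nat.sub_add_cancel hr]
  have hνk' : ν = p * k := by rw [hνk, Nat.mul_comm]
  have hkpos : 0 < k := by rw [hk]; exact Nat.pow_pos hp.pos
  have hkν : k ≤ ν := by rw [hνk]; exact Nat.le_mul_of_pos_right _ hp.pos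
  haveI : NeZero ν := ⟨hνpos.ne'⟩
  -- primitive root
  set ζ : ℂ := Complex.exp (2 * Real.pi * Complex.I / ν) with hζdef
  have hζ : IsPrimitiveRoot ζ ν := Complex.isPrimitiveRoot_exp ν hνpos.ne'
  -- index functions
  set idx : ℕ → Fin ν := fun j => ⟨j % ν, Nat.mod_lt _ hνpos⟩ with hidxdef
  have hidx : ∀ b : Fin ν, idx (b : ℕ) = b := fun b => Fin.ext (Nat.mod_eq_of_lt b.isLt)
  set idk : ℕ → Fin k := fun j => ⟨j % k, Nat.mod_lt _ hkpos⟩ with hidkdef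
  have hidk : ∀ j : Fin k, idk (j : ℕ) = j := fun j => Fin.ext (Nat.mod_eq_of_lt j.isLt)
  -- fiber counts
  set N : (Fin μ → Fin ν) → Fin ν → ℕ := fun a b => Fintype.card {i // a i = b} with hN
  have hNfilter : ∀ a b, N a b = (Finset.univ.filter fun i => a i = b).card :=
    fun a b => Fintype.card_subtype _
  set P : (Fin μ → Fin ν) → Prop := fun a => ∑ i, ζ ^ ((a i : ℕ)) = 0 with hP
  set Q : (Fin μ → Fin ν) → Prop := fun a =>
    ∀ b : Fin ν, N a b = N a (idx ((b : ℕ) % k)) with hQ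
  -- step 1: alpha μ ν = card of exponent tuples with P
  have step1 : alpha μ ν = (Finset.univ.filter P).card := by
    have hS : alpha μ ν = Nat.card {a : Fin μ → Fin ν // P a} := by
      rw [alpha, ← Nat.card_coe_set_eq]
      refine (Nat.card_congr (Equiv.ofBijective
        (f := fun a : {a : Fin μ → Fin ν // P a} =>
          (⟨fun i => ζ ^ ((a.1 i : ℕ)), ⟨fun i => by
              rw [← pow_mul, mul_comm, pow_mul, hζ.pow_eq_one, one_pow], a.2⟩⟩ :
            {z : Fin μ → ℂ | (∀ i, z i ^ ν = 1) ∧ ∑ i, z i = 0}))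
        ⟨?_, ?_⟩)).symm
      · intro a a' haa
        have h1 := congrArg Subtype.val haa
        refine Subtype.ext (funext fun i => Fin.ext ?_)
        exact hζ.pow_inj (a.1 i).isLt (a'.1 i).isLt (congrFun h1 i)
      · rintro ⟨z, hz1, hz2⟩
        choose b hb1 hb2 using fun i => hζ.eq_pow_of_pow_eq_one (hz1 i)
        have hPa : P (fun i => ⟨b i, hb1 i⟩) := by
          show (∑ i, ζ ^ (((⟨b i, hb1 i⟩ : Fin ν) : ℕ))) = 0
          calc (∑ i, ζ ^ (b i)) = ∑ i, z i := Finset.sum_congr rfl fun i _ => hb2 i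
            _ = 0 := hz2
        refine ⟨⟨fun i => ⟨b i, hb1 i⟩, hPa⟩, ?_⟩
        exact Subtype.ext (funext fun i => hb2 i)
    rw [hS, Nat.card_eq_fintype_card, Fintype.card_subtype]
  -- total count of fibers
  have htotal : ∀ a : Fin μ → Fin ν, ∑ b, N a b = μ := by
    intro a
    have h1 := Fintype.card_congr (Equiv.sigmaFiberEquiv a)
    rw [Fintype.card_sigma, Fintype.card_fin] at h1
    exact h1
  -- the sum rewrite
  have hsum_rw : ∀ a : Fin μ → Fin ν,
      (∑ i, ζ ^ ((a i : ℕ))) = ∑ j ∈ Finset.range ν, ((N a (idx j) : ℤ) : ℂ) * ζ ^ j := by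
    intro a
    have h1 : (∑ i, ζ ^ ((a i : ℕ))) = ∑ b : Fin ν, (N a b : ℂ) * ζ ^ ((b : ℕ)) := by
      have h2 := Finset.sum_fiberwise (s := (Finset.univ : Finset (Fin μ)))
        (g := a) (f := fun i => ζ ^ ((a i : ℕ)))
      rw [← h2]
      refine Finset.sum_congr rfl fun b _ => ?_
      rw [Finset.sum_congr rfl (fun i hi => by
        rw [(Finset.mem_filter.mp hi).2]), Finset.sum_const, nsmul_eq_mul, hNfilter a b]
    rw [h1, ← Fin.sum_univ_eq_sum_range (fun j => ((N a (idx j) : ℤ) : ℂ) * ζ ^ j) ν]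
    refine Finset.sum_congr rfl fun b _ => ?_
    rw [hidx b]
    norm_cast
  -- step 2: P ↔ Q
  have step2 : ∀ a, P a ↔ Q a := by
    intro a
    have hvan := vanishing_iff p r hp hr (hν ▸ hζ) (fun j => (N a (idx j) : ℤ))
    rw [← hν, ← hk] at hvan
    constructor
    · intro hPa b
      have h1 : ∀ b' < ν, (N a (idx b') : ℤ) = (N a (idx (b' % k)) : ℤ) := by
        apply hvan.mp
        rw [← hsum_rw a]
        exact hPa
      have h2 := h1 (b : ℕ) b.isLt
      rw [hidx b] at h2
      exact_mod_cast h2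
    · intro hQa
      show (∑ i, ζ ^ ((a i : ℕ))) = 0
      rw [hsum_rw a]
      apply hvan.mpr
      intro b hb
      have h2 := hQa ⟨b, hb⟩
      have h3 : idx b = ⟨b, hb⟩ := Fin.ext (Nat.mod_eq_of_lt hb)
      rw [h3]
      exact_mod_cast h2
  -- Q is equivalent to: N is given by a tuple s on residues
  have hQs : ∀ a, Q a → ∀ b' < ν, N a (idx b') = N a (idx (b' % k)) := by
    intro a hQa b' hb'
    have h2 := hQa ⟨b', hb'⟩
    have h3 : idx b' = ⟨b', hb'⟩ := Fin.ext (Nat.mod_eq_of_lt hb')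
    rw [h3]
    exact h2
  -- the partition
  have hfil : Finset.univ.filter P =
      (Finset.Nat.antidiagonalTuple k (μ / p)).biUnion
        (fun s => Finset.univ.filter fun a =>
          ∀ b : Fin ν, N a b = s (idk (b : ℕ))) := by
    ext a
    simp only [Finset.mem_filter, Finset.mem_univ, true_and, Finset.mem_biUnion]
    constructor
    · intro hPa
      have hQa := (step2 a).mp hPa
      refine ⟨fun j => N a (idx (j : ℕ)), ?_, ?_⟩
      · rw [Finset.Nat.mem_antidiagonalTuple]
        have h1 : p * ∑ j : Fin k, N a (idx (j : ℕ)) = μ := by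
          calc p * ∑ j : Fin k, N a (idx (j : ℕ))
              = p * ∑ j ∈ Finset.range k, N a (idx j) := by
                rw [Fin.sum_univ_eq_sum_range (fun j => N a (idx j)) k]
            _ = ∑ b ∈ Finset.range (p * k), N a (idx (b % k)) :=
                (sum_range_mul_mod (fun j => N a (idx j)) p k).symm
            _ = ∑ b ∈ Finset.range ν, N a (idx b) := by
                rw [← hνk']
                refine Finset.sum_congr rfl fun b hb => ?_
                exact (hQs a hQa b (Finset.mem_range.mp hb)).symm
            _ = ∑ b : Fin ν, N a b := by
                rw [← Fin.sum_univ_eq_sum_range (fun j => N a (idx j)) ν]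
                exact Finset.sum_congr rfl fun b _ => by rw [hidx b]
            _ = μ := htotal a
        rw [← h1, Nat.mul_div_cancel_left _ hp.pos]
      · intro b
        exact hQa b
    · rintro ⟨s, hs, hsa⟩
      apply (step2 a).mpr
      intro b
      rw [hsa b, hsa (idx ((b : ℕ) % k))]
      congr 1
      apply Fin.ext
      show (b : ℕ) % k = (((b : ℕ) % k) % ν) % k
      rw [Nat.mod_eq_of_lt (lt_of_lt_of_le (Nat.mod_lt _ hkpos) hkν),
        Nat.mod_mod_of_dvd _ dvd_rfl]
  rw [step1, hfil, Finset.card_biUnion]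
  · refine Finset.sum_congr rfl fun s hs => ?_
    rw [Finset.Nat.mem_antidiagonalTuple] at hs
    set m : Fin ν → ℕ := fun b => s (idk (b : ℕ)) with hm
    have hH : ∀ b : ℕ, s (idk (b % k)) = s (idk b) := by
      intro b
      congr 1
      apply Fin.ext
      show (b % k) % k = b % k
      exact Nat.mod_mod_of_dvd _ dvd_rfl
    have hmsum : ∑ b, m b = Fintype.card (Fin μ) := by
      rw [Fintype.card_fin]
      calc ∑ b : Fin ν, m b = ∑ b ∈ Finset.range ν, s (idk b) := by
            rw [← Fin.sum_univ_eq_sum_range (fun j => s (idk j)) ν]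
        _ = ∑ b ∈ Finset.range (p * k), s (idk (b % k)) := by
            rw [← hνk']
            exact Finset.sum_congr rfl fun b _ => (hH b).symm
        _ = p * ∑ j ∈ Finset.range k, s (idk j) := sum_range_mul_mod (fun j => s (idk j)) p k
        _ = p * ∑ j : Fin k, s j := by
            congr 1
            rw [← Fin.sum_univ_eq_sum_range (fun j => s (idk j)) k]
            exact Finset.sum_congr rfl fun j _ => by rw [hidk j]
        _ = μ := by rw [hs]; exact Nat.mul_div_cancel' h
    have hprod : ∏ b, (m b).factorial = (∏ i, (s i).factorial) ^ p := by
      calc ∏ b : Fin ν, (m b).factorial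
          = ∏ b ∈ Finset.range ν, (s (idk b)).factorial := by
            rw [← Fin.prod_univ_eq_prod_range (fun j => (s (idk j)).factorial) ν]
        _ = ∏ b ∈ Finset.range (p * k), (s (idk (b % k))).factorial := by
            rw [← hνk']
            exact Finset.prod_congr rfl fun b _ => by rw [hH b]
        _ = (∏ j ∈ Finset.range k, (s (idk j)).factorial) ^ p := prod_range_mul_mod (fun j => (s (idk j)).factorial) p k
        _ = (∏ i, (s i).factorial) ^ p := by
            congr 1
            rw [← Fin.prod_univ_eq_prod_range (fun j => (s (idk j)).factorial) k]
            exact Finset.prod_congr rfl fun j _ => by rw [hidk j]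
    have hcc := card_fiber_count_mul (α := Fin μ) (ι := Fin ν) m hmsum
    rw [hprod, Fintype.card_fin] at hcc
    have hfe : (Finset.univ.filter fun a : Fin μ → Fin ν => ∀ b : Fin ν, N a b = s (idk (b : ℕ)))
        = (Finset.univ.filter fun g : Fin μ → Fin ν =>
            ∀ i, Fintype.card {a // g a = i} = m i) :=
      Finset.filter_congr fun a _ => Iff.rfl
    rw [hfe]
    have hpos : 0 < (∏ i : Fin k, (s i).factorial) ^ p :=
      pow_pos (Finset.prod_pos fun i _ => Nat.factorial_pos _) p
    convert (Nat.div_eq_of_eq_mul_left hpos hcc.symm).symm using 3 <;>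
      exact Subsingleton.elim _ _
  · -- disjointness
    intro s hs t ht hst
    refine Finset.disjoint_left.mpr fun a ha hb => ?_
    simp only [Finset.mem_filter, Finset.mem_univ, true_and] at ha hb
    refine hst ?_
    funext j
    have h1 := ha (idx (j : ℕ))
    have h2 := hb (idx (j : ℕ))
    rw [h1] at h2
    have h3 : idk ((idx (j : ℕ) : ℕ)) = j := by
      apply Fin.ext
      show ((j : ℕ) % ν) % k = (j : ℕ)
      rw [Nat.mod_eq_of_lt (lt_of_lt_of_le j.isLt hkν), Nat.mod_eq_of_lt j.isLt]
    rw [h3] at h2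
    exact h2
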